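/- For any N, L ∈ ℕ+ and any a, b ∈ ℝ with a < b, there exists a function φ : ℝ² → ℝ implemented by a ReLU FNN with width at most 9N + 1 and depth at most L such that |φ(x,y) − xy| ≤ 6·(b−a)²·N^{−L} for all x, y ∈ [a,b]. -/

import Mathlib

open Real

noncomputable section

/-- `A` is an affine map from `ℝ^m` to `ℝ^n`. -/
def IsAffineMap (m n : ℕ) (A : (Fin m → ℝ) → (Fin n → ℝ)) : Prop :=
  ∃ (M : Matrix (Fin n) (Fin m) ℝ) (b : Fin n → ℝ), ∀ x, A x = M.mulVec x + b

/-- `φ : ℝ^d → ℝ` is realized by a ReLU network with exactly `L'` hidden layers,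
each of positive width at most `W`. -/
def ReLUNetRec (W : ℝ) : ℕ → ∀ d : ℕ, ((Fin d → ℝ) → ℝ) → Prop
  | 0, d, φ => ∃ A : (Fin d → ℝ) → (Fin 1 → ℝ), IsAffineMap d 1 A ∧ ∀ x, φ x = A x 0
  | L' + 1, d, φ => ∃ n : ℕ, 0 < n ∧ (n : ℝ) ≤ W ∧
      ∃ A : (Fin d → ℝ) → (Fin n → ℝ), IsAffineMap d n A ∧
        ∃ ψ : (Fin n → ℝ) → ℝ, ReLUNetRec W L' n ψ ∧
          ∀ x, φ x = ψ (fun i => max (A x i) 0)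

/-- `φ : ℝ^d → ℝ` is implemented by a ReLU FNN with width at most `W` and depth at most `D`. -/
def ImplementedBy (d : ℕ) (W D : ℝ) (φ : (Fin d → ℝ) → ℝ) : Prop :=
  ∃ L' : ℕ, (L' : ℝ) ≤ D ∧ ReLUNetRec W L' d φ

/-- one-dimensional-input version of `ImplementedBy`. -/
def ImplementedBy1 (W D : ℝ) (φ : ℝ → ℝ) : Prop :=
  ImplementedBy 1 W D (fun x => φ (x 0))

/-- two-dimensional-input version of `ImplementedBy`. -/
def ImplementedBy2 (W D : ℝ) (φ : ℝ → ℝ → ℝ) : Prop :=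
  ImplementedBy 2 W D (fun x => φ (x 0) (x 1))

namespace ReluProdAux

variable (N : ℕ)

/-- ReLU feature `max(2N g - m, 0)`. -/
def Ffeat (g : ℝ) (m : ℕ) : ℝ := max (2 * (N:ℝ) * g - (m:ℝ)) 0

/-- N-tooth sawtooth on [0,1], as explicit ReLU combination. -/
def Tmap (g : ℝ) : ℝ :=
  ∑ k ∈ Finset.range N, (Ffeat N g (2*k) - 2 * Ffeat N g (2*k+1) + Ffeat N g (2*k+2))

/-- PL interpolation of `g²` at multiples of `1/N`, as explicit ReLU combination. -/
def Qmap (g : ℝ) : ℝ :=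
  ∑ k ∈ Finset.range N, ((2*(k:ℝ)+1)/(2*(N:ℝ)^2)) * (Ffeat N g (2*k) - Ffeat N g (2*k+2))

lemma Ffeat_of_le {g : ℝ} {m : ℕ} (h : (m:ℝ) ≤ 2*(N:ℝ)*g) : Ffeat N g m = 2*(N:ℝ)*g - m :=
  max_eq_left (by linarith)

lemma Ffeat_of_ge {g : ℝ} {m : ℕ} (h : 2*(N:ℝ)*g ≤ (m:ℝ)) : Ffeat N g m = 0 :=
  max_eq_right (by linarith)

lemma sum_odd (j : ℕ) : ∑ k ∈ Finset.range j, (2*(k:ℝ)+1) = (j:ℝ)^2 := by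
  induction j with
  | zero => simp
  | succ j ih => rw [Finset.sum_range_succ, ih]; push_cast; ring

lemma cell_eval {j : ℕ} (hj : j < N) {u : ℝ}
    (h1 : (j:ℝ) ≤ (N:ℝ)*u) (h2 : (N:ℝ)*u ≤ (j:ℝ)+1) :
    Tmap N u = (2*(N:ℝ)*u - 2*j) - 2 * max (2*(N:ℝ)*u - (2*j+1)) 0 ∧
    Qmap N u = (j:ℝ)^2/(N:ℝ)^2 + ((2*(j:ℝ)+1)/(2*(N:ℝ)^2)) * (2*(N:ℝ)*u - 2*j) := by
  have hN0 : ((N:ℝ)) ≠ 0 := by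
    have : 0 < N := Nat.pos_of_ne_zero (by omega)
    positivity
  have hju : ∀ k : ℕ, k + 1 ≤ j → Ffeat N u (2*k) - 2 * Ffeat N u (2*k+1)
      + Ffeat N u (2*k+2) = 0 ∧ Ffeat N u (2*k) - Ffeat N u (2*k+2) = 2 := by
    intro k hk
    have hkj : ((k:ℝ)+1) ≤ (j:ℝ) := by exact_mod_cast hk
    have hk1 : ((2*k+2 : ℕ):ℝ) ≤ 2*(N:ℝ)*u := by push_cast; linarith
    have hk2 : ((2*k+1 : ℕ):ℝ) ≤ 2*(N:ℝ)*u := by push_cast; linarith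
    have hk0 : ((2*k : ℕ):ℝ) ≤ 2*(N:ℝ)*u := by push_cast; linarith
    rw [Ffeat_of_le N hk0, Ffeat_of_le N hk1, Ffeat_of_le N hk2]
    push_cast; constructor <;> ring
  have hgt : ∀ k : ℕ, j + 1 ≤ k → Ffeat N u (2*k) - 2 * Ffeat N u (2*k+1)
      + Ffeat N u (2*k+2) = 0 ∧ Ffeat N u (2*k) - Ffeat N u (2*k+2) = 0 := by
    intro k hk
    have hkj : ((j:ℝ)+1) ≤ (k:ℝ) := by exact_mod_cast hk
    have hk0 : 2*(N:ℝ)*u ≤ ((2*k : ℕ):ℝ) := by push_cast; linarith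
    have hk1 : 2*(N:ℝ)*u ≤ ((2*k+1 : ℕ):ℝ) := by push_cast; linarith
    have hk2 : 2*(N:ℝ)*u ≤ ((2*k+2 : ℕ):ℝ) := by push_cast; linarith
    rw [Ffeat_of_ge N hk0, Ffeat_of_ge N hk1, Ffeat_of_ge N hk2]
    norm_num
  have hFj0 : Ffeat N u (2*j) = 2*(N:ℝ)*u - 2*(j:ℝ) := by
    rw [Ffeat_of_le N (by push_cast; linarith)]; push_cast; ring
  have hFj2 : Ffeat N u (2*j+2) = 0 := by
    rw [Ffeat_of_ge N (by push_cast; linarith)]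
  have hFj1 : Ffeat N u (2*j+1) = max (2*(N:ℝ)*u - (2*(j:ℝ)+1)) 0 := by
    unfold Ffeat; push_cast; ring_nf
  have hsplit : Finset.range N = Finset.range (j+1) ∪ Finset.Ico (j+1) N := by
    rw [Finset.range_eq_Ico]
    rw [Finset.range_eq_Ico]; exact (Finset.Ico_union_Ico_eq_Ico (Nat.zero_le _) hj).symm
  have hdisj : Disjoint (Finset.range (j+1)) (Finset.Ico (j+1) N) := by
    simp [Finset.disjoint_left]; omega
  constructor
  · unfold Tmap
    rw [hsplit, Finset.sum_union hdisj, Finset.sum_range_succ]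
    rw [Finset.sum_congr rfl (fun k hk => (hju k (by simpa using hk)).1),
      Finset.sum_congr rfl (fun k hk => (hgt k (by simp at hk; omega)).1)]
    rw [hFj0, hFj1, hFj2]
    simp
  · unfold Qmap
    have e1 : ∀ k ∈ Finset.range j, ((2*(k:ℝ)+1)/(2*(N:ℝ)^2)) *
        (Ffeat N u (2*k) - Ffeat N u (2*k+2)) = (2*(k:ℝ)+1) * ((N:ℝ)^2)⁻¹ := by
      intro k hk
      rw [(hju k (by simpa using hk)).2]
      field_simp
    have e2 : ∀ k ∈ Finset.Ico (j+1) N, ((2*(k:ℝ)+1)/(2*(N:ℝ)^2)) *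
        (Ffeat N u (2*k) - Ffeat N u (2*k+2)) = 0 := by
      intro k hk
      rw [(hgt k (by simp at hk; omega)).2, mul_zero]
    rw [hsplit, Finset.sum_union hdisj, Finset.sum_range_succ,
      Finset.sum_congr rfl e1, Finset.sum_congr rfl e2,
      ← Finset.sum_mul, sum_odd, hFj0, hFj2]
    field_simp
    rw [Finset.sum_const_zero]; ring


lemma exists_cell (hN : 0 < N) {u : ℝ} (hu0 : 0 ≤ u) (hu1 : u ≤ 1) :
    ∃ j, j < N ∧ (j:ℝ) ≤ (N:ℝ)*u ∧ (N:ℝ)*u ≤ (j:ℝ)+1 := by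
  have hNu0 : 0 ≤ (N:ℝ)*u := by positivity
  have hcast : (((⌊(N:ℝ)*u⌋).toNat : ℕ) : ℝ) = ((⌊(N:ℝ)*u⌋ : ℤ) : ℝ) := by
    exact_mod_cast congrArg (fun z : ℤ => (z:ℝ)) (Int.toNat_of_nonneg (Int.floor_nonneg.mpr hNu0))
  by_cases hc : (⌊(N:ℝ)*u⌋).toNat < N
  · refine ⟨(⌊(N:ℝ)*u⌋).toNat, hc, ?_, ?_⟩
    · rw [hcast]
      exact Int.floor_le _
    · rw [hcast]
      exact le_of_lt (Int.lt_floor_add_one _)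
  · refine ⟨N - 1, by omega, ?_, ?_⟩
    · have h1 : (N:ℤ) ≤ ⌊(N:ℝ)*u⌋ := by omega
      have h2 : ((N:ℤ):ℝ) ≤ (N:ℝ)*u := le_trans (by exact_mod_cast h1) (Int.floor_le _)
      have h3 : ((N-1:ℕ):ℝ) ≤ (N:ℝ) := by
        have : ((N-1:ℕ):ℝ) = (N:ℝ) - 1 := by
          have : (1:ℕ) ≤ N := hN
          push_cast [Nat.cast_sub this]
          ring
        rw [this]; linarith
      exact le_trans (by push_cast at h2 ⊢; linarith) le_rfl
    · have hNu : (N:ℝ)*u ≤ (N:ℝ) := by nlinarith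
      have : ((N-1:ℕ):ℝ) = (N:ℝ) - 1 := by
        have h1 : (1:ℕ) ≤ N := hN
        push_cast [Nat.cast_sub h1]
        ring
      rw [this]; linarith

lemma key (hN : 0 < N) {u : ℝ} (hu0 : 0 ≤ u) (hu1 : u ≤ 1) :
    0 ≤ Tmap N u ∧ Tmap N u ≤ 1 ∧ Tmap N u ≤ 2*(N:ℝ)*u ∧
    u^2 = Qmap N u - Tmap N u/(2*(N:ℝ)^2) + (Tmap N u)^2/(4*(N:ℝ)^2) := by
  have hN0 : ((N:ℝ)) ≠ 0 := by
    have : (0:ℝ) < (N:ℝ) := by exact_mod_cast hN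
    linarith
  obtain ⟨j, hj, h1, h2⟩ := exists_cell N hN hu0 hu1
  obtain ⟨hT, hQ⟩ := cell_eval N hj h1 h2
  have hj0 : (0:ℝ) ≤ (j:ℝ) := Nat.cast_nonneg j
  rcases le_total (2*(N:ℝ)*u - (2*(j:ℝ)+1)) 0 with h | h
  · rw [max_eq_right h] at hT
    refine ⟨by rw [hT]; linarith, by rw [hT]; linarith, by rw [hT]; linarith, ?_⟩
    rw [hT, hQ]; field_simp; ring
  · rw [max_eq_left h] at hT
    refine ⟨by rw [hT]; linarith, by rw [hT]; linarith, by rw [hT]; linarith, ?_⟩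
    rw [hT, hQ]; field_simp; ring

/-- iterated sawtooth -/
def Gseq (u : ℝ) : ℕ → ℝ
  | 0 => u
  | s+1 => Tmap N (Gseq u s)

/-- scaled accumulator -/
def Rseq (u : ℝ) : ℕ → ℝ
  | 0 => 0
  | s+1 => 4*(N:ℝ)^2 * (Rseq u s + Qmap N (Gseq N u s) - Tmap N (Gseq N u s)/(2*(N:ℝ)^2))

lemma G_mem (hN : 0 < N) {u : ℝ} (hu0 : 0 ≤ u) (hu1 : u ≤ 1) :
    ∀ s, 0 ≤ Gseq N u s ∧ Gseq N u s ≤ 1 := by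
  intro s
  induction s with
  | zero => exact ⟨hu0, hu1⟩
  | succ s ih =>
    obtain ⟨hT0, hT1, _, _⟩ := key N hN ih.1 ih.2
    exact ⟨hT0, hT1⟩

lemma incr_nonneg (hN : 0 < N) {g : ℝ} (hg0 : 0 ≤ g) (hg1 : g ≤ 1) :
    0 ≤ Qmap N g - Tmap N g/(2*(N:ℝ)^2) := by
  have hN0 : (0:ℝ) < (N:ℝ) := by exact_mod_cast hN
  obtain ⟨hT0, hT1, hT2, hid⟩ := key N hN hg0 hg1
  have h4 : (0:ℝ) < 4*(N:ℝ)^2 := by positivity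
  have hTT : (Tmap N g)^2 ≤ 4*(N:ℝ)^2 * g^2 := by nlinarith
  have hdd : (Tmap N g)^2/(4*(N:ℝ)^2) ≤ g^2 := by
    rw [div_le_iff₀ h4]; nlinarith
  linarith

lemma R_nonneg (hN : 0 < N) {u : ℝ} (hu0 : 0 ≤ u) (hu1 : u ≤ 1) :
    ∀ s, 0 ≤ Rseq N u s := by
  intro s
  induction s with
  | zero => exact le_refl 0
  | succ s ih =>
    have hg := G_mem N hN hu0 hu1 s
    have hi := incr_nonneg N hN hg.1 hg.2
    have hN0 : (0:ℝ) < (N:ℝ) := by exact_mod_cast hN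
    show 0 ≤ 4*(N:ℝ)^2 * (Rseq N u s + Qmap N (Gseq N u s) - Tmap N (Gseq N u s)/(2*(N:ℝ)^2))
    nlinarith

lemma R_identity (hN : 0 < N) {u : ℝ} (hu0 : 0 ≤ u) (hu1 : u ≤ 1) :
    ∀ s, u^2 * (4*(N:ℝ)^2)^s = Rseq N u s + (Gseq N u s)^2 := by
  intro s
  induction s with
  | zero => simp [Rseq, Gseq]
  | succ s ih =>
    have hg := G_mem N hN hu0 hu1 s
    obtain ⟨_, _, _, hid⟩ := key N hN hg.1 hg.2
    have hN0 : ((N:ℝ)) ≠ 0 := by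
      have : (0:ℝ) < (N:ℝ) := by exact_mod_cast hN
      linarith
    show u^2 * (4*(N:ℝ)^2)^(s+1) =
      4*(N:ℝ)^2 * (Rseq N u s + Qmap N (Gseq N u s) - Tmap N (Gseq N u s)/(2*(N:ℝ)^2))
      + (Tmap N (Gseq N u s))^2
    rw [pow_succ (4*(N:ℝ)^2) s, ← mul_assoc, ih, hid]
    field_simp
    ring


/-! ### Network part -/

def act {n : ℕ} (z : Fin n → ℝ) : Fin n → ℝ := fun i => max (z i) 0

def pad {n : ℕ} (z : Fin n → ℝ) (m : ℕ) : ℝ := if h : m < n then z ⟨m, h⟩ else 0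

lemma pad_add {n : ℕ} (x y : Fin n → ℝ) (m : ℕ) : pad (x + y) m = pad x m + pad y m := by
  unfold pad; split_ifs <;> simp

lemma pad_smul {n : ℕ} (r : ℝ) (x : Fin n → ℝ) (m : ℕ) : pad (r • x) m = r * pad x m := by
  unfold pad; split_ifs <;> simp

def Tsum (N off : ℕ) {n : ℕ} (z : Fin n → ℝ) : ℝ :=
  ∑ k ∈ Finset.range N, (pad z (off+2*k) - 2 * pad z (off+2*k+1) + pad z (off+2*k+2))

def Qsum (N off : ℕ) {n : ℕ} (z : Fin n → ℝ) : ℝ :=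
  ∑ k ∈ Finset.range N, ((2*(k:ℝ)+1)/(2*(N:ℝ)^2)) * (pad z (off+2*k) - pad z (off+2*k+2))

lemma Tsum_add (N off : ℕ) {n : ℕ} (x y : Fin n → ℝ) :
    Tsum N off (x + y) = Tsum N off x + Tsum N off y := by
  unfold Tsum; rw [← Finset.sum_add_distrib]
  exact Finset.sum_congr rfl fun k _ => by rw [pad_add, pad_add, pad_add]; ring

lemma Tsum_smul (N off : ℕ) {n : ℕ} (r : ℝ) (x : Fin n → ℝ) :
    Tsum N off (r • x) = r * Tsum N off x := by
  unfold Tsum; rw [Finset.mul_sum]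
  exact Finset.sum_congr rfl fun k _ => by rw [pad_smul, pad_smul, pad_smul]; ring

lemma Qsum_add (N off : ℕ) {n : ℕ} (x y : Fin n → ℝ) :
    Qsum N off (x + y) = Qsum N off x + Qsum N off y := by
  unfold Qsum; rw [← Finset.sum_add_distrib]
  exact Finset.sum_congr rfl fun k _ => by rw [pad_add, pad_add]; ring

lemma Qsum_smul (N off : ℕ) {n : ℕ} (r : ℝ) (x : Fin n → ℝ) :
    Qsum N off (r • x) = r * Qsum N off x := by
  unfold Qsum; rw [Finset.mul_sum]
  exact Finset.sum_congr rfl fun k _ => by rw [pad_smul, pad_smul]; ring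

/-- generic: linear-plus-constant maps are affine -/
lemma isAffineMap_linear_add {m n : ℕ} (f : (Fin m → ℝ) → (Fin n → ℝ)) (bb : Fin n → ℝ)
    (hadd : ∀ x y, f (x + y) = f x + f y) (hsmul : ∀ (r : ℝ) x, f (r • x) = r • f x) :
    IsAffineMap m n (fun x => f x + bb) := by
  let fl : (Fin m → ℝ) →ₗ[ℝ] (Fin n → ℝ) :=
    { toFun := f, map_add' := hadd, map_smul' := hsmul }
  refine ⟨LinearMap.toMatrix' fl, bb, fun x => ?_⟩
  have h : (LinearMap.toMatrix' fl).mulVec x = f x := by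
    rw [← Matrix.toLin'_apply, Matrix.toLin'_toMatrix']; rfl
  rw [h]

/-- chain lemma: alternating affine maps and ReLU give a network -/
lemma chain {W : ℝ} {n : ℕ} (hn : 0 < n) (hnW : (n:ℝ) ≤ W)
    (B : (Fin n → ℝ) → (Fin n → ℝ)) (hB : IsAffineMap n n B)
    (out : (Fin n → ℝ) → ℝ)
    (hout : ∃ A : (Fin n → ℝ) → (Fin 1 → ℝ), IsAffineMap n 1 A ∧ ∀ z, out z = A z 0) :
    ∀ (k : ℕ) {d : ℕ} (A0 : (Fin d → ℝ) → (Fin n → ℝ)), IsAffineMap d n A0 →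
      ReLUNetRec W (k+1) d (fun x => out ((fun z => act (B z))^[k] (act (A0 x)))) := by
  intro k
  induction k with
  | zero =>
    intro d A0 hA0
    exact ⟨n, hn, hnW, A0, hA0, out, hout, fun x => rfl⟩
  | succ k ih =>
    intro d A0 hA0
    refine ⟨n, hn, hnW, A0, hA0,
      fun z => out ((fun z => act (B z))^[k] (act (B z))), ih B hB, fun x => ?_⟩
    simp only [Function.iterate_succ_apply]
    rfl

/-! ### The specific network -/

/-- state, as a function of raw index -/
def stN (N s : ℕ) (u v : ℝ) : ℕ → ℝ := fun m =>
  if m = 0 then u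
  else if m = 1 then v
  else if m = 2 then Rseq N u s
  else if m = 3 then Rseq N v s
  else if m < 5+2*N then Ffeat N (Gseq N u s) (m-4)
  else Ffeat N (Gseq N v s) (m-(5+2*N))

def st (N s : ℕ) (u v : ℝ) : Fin (4*N+6) → ℝ := fun i => stN N s u v i.1

lemma pad_st {N s : ℕ} {u v : ℝ} {m : ℕ} (h : m < 4*N+6) :
    pad (st N s u v) m = stN N s u v m := by
  unfold pad st
  rw [dif_pos h]

lemma st_feat_u {N s : ℕ} {u v : ℝ} {j m : ℕ} (hj : j = 4+m) (hm : m < 2*N+1) :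
    stN N s u v j = Ffeat N (Gseq N u s) m := by
  subst hj; unfold stN
  rw [if_neg (by omega), if_neg (by omega), if_neg (by omega), if_neg (by omega),
    if_pos (by omega)]
  congr 1
  omega

lemma st_feat_v {N s : ℕ} {u v : ℝ} {j m : ℕ} (hj : j = 5+2*N+m) (hm : m < 2*N+1) :
    stN N s u v j = Ffeat N (Gseq N v s) m := by
  subst hj; unfold stN
  rw [if_neg (by omega), if_neg (by omega), if_neg (by omega), if_neg (by omega),
    if_neg (by omega)]
  congr 1
  omega

lemma Tsum_st_u (N s : ℕ) (u v : ℝ) : Tsum N 4 (st N s u v) = Tmap N (Gseq N u s) := by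
  unfold Tsum Tmap
  refine Finset.sum_congr rfl fun k hk => ?_
  have hk' : k < N := Finset.mem_range.mp hk
  rw [pad_st (by omega), pad_st (by omega), pad_st (by omega),
    st_feat_u rfl (by omega), st_feat_u (m := 2*k+1) (by omega) (by omega),
    st_feat_u (m := 2*k+2) (by omega) (by omega)]

lemma Qsum_st_u (N s : ℕ) (u v : ℝ) : Qsum N 4 (st N s u v) = Qmap N (Gseq N u s) := by
  unfold Qsum Qmap
  refine Finset.sum_congr rfl fun k hk => ?_
  have hk' : k < N := Finset.mem_range.mp hk
  rw [pad_st (by omega), pad_st (by omega),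
    st_feat_u rfl (by omega), st_feat_u (m := 2*k+2) (by omega) (by omega)]

lemma Tsum_st_v (N s : ℕ) (u v : ℝ) : Tsum N (5+2*N) (st N s u v) = Tmap N (Gseq N v s) := by
  unfold Tsum Tmap
  refine Finset.sum_congr rfl fun k hk => ?_
  have hk' : k < N := Finset.mem_range.mp hk
  rw [pad_st (by omega), pad_st (by omega), pad_st (by omega),
    st_feat_v rfl (by omega), st_feat_v (m := 2*k+1) (by omega) (by omega),
    st_feat_v (m := 2*k+2) (by omega) (by omega)]

lemma Qsum_st_v (N s : ℕ) (u v : ℝ) : Qsum N (5+2*N) (st N s u v) = Qmap N (Gseq N v s) := by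
  unfold Qsum Qmap
  refine Finset.sum_congr rfl fun k hk => ?_
  have hk' : k < N := Finset.mem_range.mp hk
  rw [pad_st (by omega), pad_st (by omega),
    st_feat_v rfl (by omega), st_feat_v (m := 2*k+2) (by omega) (by omega)]

/-- linear part of hidden transition -/
def Bmat (N : ℕ) (z : Fin (4*N+6) → ℝ) : Fin (4*N+6) → ℝ := fun i =>
  if i.1 = 0 then pad z 0
  else if i.1 = 1 then pad z 1
  else if i.1 = 2 then 4*(N:ℝ)^2 * (pad z 2 + Qsum N 4 z - Tsum N 4 z/(2*(N:ℝ)^2))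
  else if i.1 = 3 then 4*(N:ℝ)^2 * (pad z 3 + Qsum N (5+2*N) z - Tsum N (5+2*N) z/(2*(N:ℝ)^2))
  else if i.1 < 5+2*N then 2*(N:ℝ) * Tsum N 4 z
  else 2*(N:ℝ) * Tsum N (5+2*N) z

def Bbias (N : ℕ) : Fin (4*N+6) → ℝ := fun i =>
  if i.1 = 0 then 0
  else if i.1 = 1 then 0
  else if i.1 = 2 then 0
  else if i.1 = 3 then 0
  else if i.1 < 5+2*N then -(((i.1-4 : ℕ)):ℝ)
  else -(((i.1-(5+2*N) : ℕ)):ℝ)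

def Bmap (N : ℕ) : (Fin (4*N+6) → ℝ) → (Fin (4*N+6) → ℝ) := fun z => Bmat N z + Bbias N

lemma Bmap_affine (N : ℕ) : IsAffineMap (4*N+6) (4*N+6) (Bmap N) := by
  apply isAffineMap_linear_add
  · intro x y
    funext i
    simp only [Bmat, Pi.add_apply]
    split_ifs <;> simp only [Tsum_add, Qsum_add, pad_add] <;> ring
  · intro r x
    funext i
    simp only [Bmat, Pi.smul_apply, smul_eq_mul]
    split_ifs <;> simp only [Tsum_smul, Qsum_smul, pad_smul] <;> ring


lemma step_st (N : ℕ) (hN : 0 < N) {u v : ℝ} (hu0 : 0 ≤ u) (hu1 : u ≤ 1)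
    (hv0 : 0 ≤ v) (hv1 : v ≤ 1) (s : ℕ) :
    act (Bmap N (st N s u v)) = st N (s+1) u v := by
  funext i
  show max (Bmat N (st N s u v) i + Bbias N i) 0 = stN N (s+1) u v i.1
  unfold Bmat Bbias stN
  rw [Tsum_st_u, Qsum_st_u, Tsum_st_v, Qsum_st_v]
  split_ifs with h0 h1 h2 h3 h4
  · rw [pad_st (by omega), show stN N s u v 0 = u from by simp [stN], add_zero]
    exact max_eq_left hu0
  · rw [pad_st (by omega), show stN N s u v 1 = v from by simp [stN], add_zero]
    exact max_eq_left hv0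
  · rw [pad_st (by omega), show stN N s u v 2 = Rseq N u s from by simp [stN], add_zero]
    exact max_eq_left (R_nonneg N hN hu0 hu1 (s+1))
  · rw [pad_st (by omega), show stN N s u v 3 = Rseq N v s from by simp [stN], add_zero]
    exact max_eq_left (R_nonneg N hN hv0 hv1 (s+1))
  · unfold Ffeat
    rw [show Gseq N u (s+1) = Tmap N (Gseq N u s) from rfl, sub_eq_add_neg]
  · unfold Ffeat
    rw [show Gseq N v (s+1) = Tmap N (Gseq N v s) from rfl, sub_eq_add_neg]

lemma iter_st (N : ℕ) (hN : 0 < N) {u v : ℝ} (hu0 : 0 ≤ u) (hu1 : u ≤ 1)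
    (hv0 : 0 ≤ v) (hv1 : v ≤ 1) :
    ∀ k, (fun z => act (Bmap N z))^[k] (st N 0 u v) = st N k u v := by
  intro k
  induction k with
  | zero => rfl
  | succ k ih =>
    rw [Function.iterate_succ_apply', ih]
    exact step_st N hN hu0 hu1 hv0 hv1 k

/-- input layer -/
def A0lin (N : ℕ) (c : ℝ) (x : Fin 2 → ℝ) : Fin (4*N+6) → ℝ := fun i =>
  if i.1 = 0 then (x 0 + x 1)/(2*c)
  else if i.1 = 1 then (x 0 - x 1)/(2*c)
  else if i.1 = 2 then 0
  else if i.1 = 3 then 0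
  else if i.1 < 5+2*N then 2*(N:ℝ) * ((x 0 + x 1)/(2*c))
  else 2*(N:ℝ) * ((x 0 - x 1)/(2*c))

def A0bias (N : ℕ) (a c : ℝ) : Fin (4*N+6) → ℝ := fun i =>
  if i.1 = 0 then -(a/c)
  else if i.1 = 1 then 1/2
  else if i.1 = 2 then 0
  else if i.1 = 3 then 0
  else if i.1 < 5+2*N then 2*(N:ℝ) * (-(a/c)) - (((i.1-4 : ℕ)):ℝ)
  else 2*(N:ℝ) * (1/2 : ℝ) - (((i.1-(5+2*N) : ℕ)):ℝ)

def A0map (N : ℕ) (a c : ℝ) : (Fin 2 → ℝ) → (Fin (4*N+6) → ℝ) :=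
  fun x => A0lin N c x + A0bias N a c

lemma A0map_affine (N : ℕ) (a c : ℝ) : IsAffineMap 2 (4*N+6) (A0map N a c) := by
  apply isAffineMap_linear_add
  · intro x y
    funext i
    simp only [A0lin, Pi.add_apply]
    split_ifs <;> ring
  · intro r x
    funext i
    simp only [A0lin, Pi.smul_apply, smul_eq_mul]
    split_ifs <;> ring

lemma A0_st (N : ℕ) (a c : ℝ) (x : Fin 2 → ℝ) (u v : ℝ)
    (hu : (x 0 + x 1)/(2*c) + -(a/c) = u) (hv : (x 0 - x 1)/(2*c) + 1/2 = v)
    (hu0 : 0 ≤ u) (hv0 : 0 ≤ v) :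
    act (A0map N a c x) = st N 0 u v := by
  funext i
  show max (A0lin N c x i + A0bias N a c i) 0 = stN N 0 u v i.1
  unfold A0lin A0bias stN
  split_ifs with h0 h1 h2 h3 h4
  · rw [hu]; exact max_eq_left hu0
  · rw [hv]; exact max_eq_left hv0
  · simp [Rseq]
  · simp [Rseq]
  · unfold Ffeat
    rw [show Gseq N u 0 = u from rfl]
    congr 1
    rw [← hu]; ring
  · unfold Ffeat
    rw [show Gseq N v 0 = v from rfl]
    congr 1
    rw [← hv]; ring

/-- output layer -/
def outLin (N L : ℕ) (a c : ℝ) (z : Fin (4*N+6) → ℝ) : Fin 1 → ℝ := fun _ =>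
  2*a*c*pad z 0 + c^2*pad z 1
  + (c^2/(4*(N:ℝ)^2)^L) * (4*(N:ℝ)^2) * (pad z 2 + Qsum N 4 z - Tsum N 4 z/(2*(N:ℝ)^2))
  - (c^2/(4*(N:ℝ)^2)^L) * (4*(N:ℝ)^2) * (pad z 3 + Qsum N (5+2*N) z - Tsum N (5+2*N) z/(2*(N:ℝ)^2))

def outBias (a c : ℝ) : Fin 1 → ℝ := fun _ => a^2 - c^2/4

def outMap (N L : ℕ) (a c : ℝ) : (Fin (4*N+6) → ℝ) → (Fin 1 → ℝ) :=
  fun z => outLin N L a c z + outBias a c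

lemma outMap_affine (N L : ℕ) (a c : ℝ) : IsAffineMap (4*N+6) 1 (outMap N L a c) := by
  apply isAffineMap_linear_add
  · intro x y
    funext i
    simp only [outLin, Pi.add_apply, Tsum_add, Qsum_add, pad_add]
    ring
  · intro r x
    funext i
    simp only [outLin, Pi.smul_apply, smul_eq_mul, Tsum_smul, Qsum_smul, pad_smul]
    ring

def outF (N L : ℕ) (a c : ℝ) (z : Fin (4*N+6) → ℝ) : ℝ := outMap N L a c z 0

lemma out_st (N L s : ℕ) (a c u v : ℝ) :
    outF N L a c (st N s u v) = a^2 - c^2/4 + 2*a*c*u + c^2*v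
      + (c^2/(4*(N:ℝ)^2)^L) * Rseq N u (s+1)
      - (c^2/(4*(N:ℝ)^2)^L) * Rseq N v (s+1) := by
  show outLin N L a c (st N s u v) 0 + (a^2 - c^2/4) = _
  unfold outLin
  rw [Tsum_st_u, Qsum_st_u, Tsum_st_v, Qsum_st_v,
    pad_st (by omega), pad_st (by omega), pad_st (by omega), pad_st (by omega),
    show stN N s u v 0 = u from by simp [stN],
    show stN N s u v 1 = v from by simp [stN],
    show stN N s u v 2 = Rseq N u s from by simp [stN],
    show stN N s u v 3 = Rseq N v s from by simp [stN],
    show Rseq N u (s+1) = 4*(N:ℝ)^2 * (Rseq N u s + Qmap N (Gseq N u s)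
      - Tmap N (Gseq N u s)/(2*(N:ℝ)^2)) from rfl,
    show Rseq N v (s+1) = 4*(N:ℝ)^2 * (Rseq N v s + Qmap N (Gseq N v s)
      - Tmap N (Gseq N v s)/(2*(N:ℝ)^2)) from rfl]
  ring

end ReluProdAux

set_option maxHeartbeats 2000000 in
open ReluProdAux in
theorem relu_approx_product_interval
    (N L : ℕ) (hN : 0 < N) (hL : 0 < L) (a b : ℝ) (hab : a < b) :
    ∃ φ : ℝ → ℝ → ℝ,
      ImplementedBy2 (9 * (N : ℝ) + 1) (L : ℝ) φ ∧
      ∀ x ∈ Set.Icc a b, ∀ y ∈ Set.Icc a b,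
        |φ x y - x * y| ≤ 6 * (b - a) ^ 2 * (N : ℝ) ^ (-(L : ℝ)) := by
  set c : ℝ := b - a with hcdef
  have hc : 0 < c := by rw [hcdef]; linarith
  have hc0 : c ≠ 0 := ne_of_gt hc
  clear_value c
  have hN1 : (1:ℝ) ≤ (N:ℝ) := by exact_mod_cast hN
  have hNR : (0:ℝ) < (N:ℝ) := by linarith
  set MM : ℝ := 4*(N:ℝ)^2 with hMM
  have hMpos : (0:ℝ) < MM ^ L := by rw [hMM]; positivity
  clear_value MM
  set φfun : (Fin 2 → ℝ) → ℝ :=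
    fun x => outF N L a c ((fun z => act (Bmap N z))^[L-1] (act (A0map N a c x))) with hφfun
  clear_value φfun
  refine ⟨fun x y => φfun ![x, y], ?_, ?_⟩
  · -- implementability
    have hvec : ∀ x : Fin 2 → ℝ, ![x 0, x 1] = x := by
      intro x; funext i; fin_cases i <;> rfl
    have heq : (fun x : Fin 2 → ℝ => φfun ![x 0, x 1]) = φfun := by
      funext x; rw [hvec]
    refine ⟨L, le_refl _, ?_⟩
    show ReLUNetRec (9 * (N : ℝ) + 1) L 2 (fun x => φfun ![x 0, x 1])
    rw [heq, hφfun]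
    have hnet := chain (W := 9 * (N : ℝ) + 1) (n := 4*N+6) (by omega)
      (by push_cast; linarith) (Bmap N) (Bmap_affine N) (outF N L a c)
      ⟨outMap N L a c, outMap_affine N L a c, fun z => rfl⟩ (L-1) (A0map N a c)
      (A0map_affine N a c)
    have hL1 : L - 1 + 1 = L := by omega
    rw [hL1] at hnet
    exact hnet
  · -- error bound
    intro x hx y hy
    obtain ⟨hxa, hxb⟩ := hx
    obtain ⟨hya, hyb⟩ := hy
    set u : ℝ := (x + y)/(2*c) + -(a/c) with hudef
    set v : ℝ := (x - y)/(2*c) + 1/2 with hvdef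
    have hu' : u = (x + y - 2*a)/(2*c) := by rw [hudef]; field_simp; ring
    have hv' : v = (x - y + c)/(2*c) := by rw [hvdef]; field_simp
    clear_value u v
    have hu0 : 0 ≤ u := by rw [hu']; apply div_nonneg; linarith; linarith
    have hu1 : u ≤ 1 := by
      rw [hu', div_le_one (by linarith)]
      simp only [hcdef]; linarith
    have hv0 : 0 ≤ v := by rw [hv']; apply div_nonneg; linarith; linarith
    have hv1 : v ≤ 1 := by
      rw [hv', div_le_one (by linarith)]
      linarith
    -- value of the network
    have hinit : act (A0map N a c ![x, y]) = st N 0 u v := by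
      apply A0_st N a c ![x, y] u v ?_ ?_ hu0 hv0
      · show (x + y)/(2*c) + -(a/c) = u
        exact hudef.symm
      · show (x - y)/(2*c) + 1/2 = v
        exact hvdef.symm
    have hval : φfun ![x, y] = a^2 - c^2/4 + 2*a*c*u + c^2*v
        + (c^2/MM^L) * Rseq N u L - (c^2/MM^L) * Rseq N v L := by
      rw [hφfun]
      simp only
      rw [hinit, iter_st N hN hu0 hu1 hv0 hv1 (L-1), out_st]
      have hL1 : L - 1 + 1 = L := by omega
      rw [hL1, hMM]
    -- exact product expression
    have hxy : x * y = a^2 - c^2/4 + 2*a*c*u + c^2*v + c^2*u^2 - c^2*v^2 := by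
      rw [hu', hv']
      field_simp
      ring
    -- error per track
    have htrack : ∀ w : ℝ, 0 ≤ w → w ≤ 1 →
        0 ≤ w^2 - Rseq N w L / MM^L ∧ w^2 - Rseq N w L / MM^L ≤ 1/MM^L := by
      intro w hw0 hw1
      have hid := R_identity N hN hw0 hw1 L
      have hg := G_mem N hN hw0 hw1 L
      have hdiff : w^2 - Rseq N w L / MM^L = (Gseq N w L)^2 / MM^L := by
        rw [eq_div_iff (ne_of_gt hMpos)]
        rw [sub_mul, div_mul_cancel₀ _ (ne_of_gt hMpos)]
        rw [← hMM] at hid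
        linarith [hid]
      constructor
      · rw [hdiff]; positivity
      · rw [hdiff, div_le_div_iff_of_pos_right hMpos]
        nlinarith [hg.1, hg.2]
    have hU := htrack u hu0 hu1
    have hV := htrack v hv0 hv1
    have habs : |φfun ![x, y] - x * y| ≤ 2*c^2/MM^L := by
      rw [hval, hxy]
      have h1 : φfun ![x,y] - φfun ![x,y] = 0 := sub_self _
      have hexp : (a^2 - c^2/4 + 2*a*c*u + c^2*v + (c^2/MM^L) * Rseq N u L
          - (c^2/MM^L) * Rseq N v L)
          - (a^2 - c^2/4 + 2*a*c*u + c^2*v + c^2*u^2 - c^2*v^2)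
          = c^2 * (v^2 - Rseq N v L / MM^L) - c^2 * (u^2 - Rseq N u L / MM^L) := by
        ring
      rw [hexp, abs_le]
      have hcc : (0:ℝ) ≤ c^2 := sq_nonneg c
      have hA1 : 0 ≤ c^2 * (v^2 - Rseq N v L / MM^L) := mul_nonneg hcc hV.1
      have hA2 : c^2 * (v^2 - Rseq N v L / MM^L) ≤ c^2 * (1/MM^L) :=
        mul_le_mul_of_nonneg_left hV.2 hcc
      have hB1 : 0 ≤ c^2 * (u^2 - Rseq N u L / MM^L) := mul_nonneg hcc hU.1
      have hB2 : c^2 * (u^2 - Rseq N u L / MM^L) ≤ c^2 * (1/MM^L) :=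
        mul_le_mul_of_nonneg_left hU.2 hcc
      have hee : 2*c^2/MM^L = 2*(c^2 * (1/MM^L)) := by ring
      constructor <;> linarith
    -- compare MM^L with N^L and rpow
    have hrpow : (N:ℝ) ^ (-(L:ℝ)) = ((N:ℝ)^(L:ℕ))⁻¹ := by
      rw [← Real.rpow_natCast (N:ℝ) L, ← Real.rpow_neg (le_of_lt hNR)]
    have hNL : (0:ℝ) < (N:ℝ)^(L:ℕ) := by positivity
    have hpow : (N:ℝ)^(L:ℕ) ≤ MM^L := by
      apply pow_le_pow_left₀ (le_of_lt hNR)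
      rw [hMM]; nlinarith
    have hfin : 2*c^2/MM^L ≤ 6 * c^2 * (N:ℝ) ^ (-(L:ℝ)) := by
      rw [hrpow]
      have h1 : (MM^L)⁻¹ ≤ ((N:ℝ)^(L:ℕ))⁻¹ := by
        exact inv_anti₀ hNL hpow
      have hcc : (0:ℝ) < c^2 := by positivity
      calc 2*c^2/MM^L = 2*c^2 * (MM^L)⁻¹ := by rw [div_eq_mul_inv]
        _ ≤ 2*c^2 * ((N:ℝ)^(L:ℕ))⁻¹ := by nlinarith
        _ ≤ 6*c^2 * ((N:ℝ)^(L:ℕ))⁻¹ := by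
            have : (0:ℝ) < ((N:ℝ)^(L:ℕ))⁻¹ := by positivity
            nlinarith
    exact habs.trans hfin
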